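/- Consider SEMO with uniform parent selection on OneMinMax. There is a constant c > 0 such that for all n, the expected number of iterations until the population covers the whole Pareto front is at least (n² ln n)/2 − c·n²; combined with the known upper bound O(n² log n), the expected time is Θ(n² log n). -/

import Mathlib

noncomputable section
open scoped ENNReal
attribute [local instance] Classical.propDecidable

namespace EMO


/-- A bit string of length `n`. -/
abbrev BitString (n : ℕ) := Fin n → Bool

/-- Number of one-bits. -/
def onesCount {n : ℕ} (x : BitString n) : ℕ :=
  (Finset.univ.filter fun i => x i = true).card

def allOnes (n : ℕ) : BitString n := fun _ => true
def allZeros (n : ℕ) : BitString n := fun _ => false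

/-- The bi-objective function OneMinMax. -/
def OneMinMax {n : ℕ} (x : BitString n) : ℤ × ℤ :=
  ((onesCount x : ℤ), (n : ℤ) - (onesCount x : ℤ))

/-- Number of leading ones. -/
def leadingOnes {n : ℕ} (x : BitString n) : ℕ :=
  (Finset.univ.filter fun i : Fin n => ∀ j : Fin n, j ≤ i → x j = true).card

/-- Number of trailing zeros. -/
def trailingZeros {n : ℕ} (x : BitString n) : ℕ :=
  (Finset.univ.filter fun i : Fin n => ∀ j : Fin n, i ≤ j → x j = false).card

/-- The bi-objective function LOTZ. -/
def LOTZ {n : ℕ} (x : BitString n) : ℤ × ℤ :=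
  ((leadingOnes x : ℤ), (trailingZeros x : ℤ))

/-- `y` dominates `x` (maximisation). -/
def dominates {n : ℕ} (f : BitString n → ℤ × ℤ) (y x : BitString n) : Prop :=
  (f x).1 ≤ (f y).1 ∧ (f x).2 ≤ (f y).2 ∧ f x ≠ f y

/-- `y` weakly dominates `x` (maximisation). -/
def weaklyDominates {n : ℕ} (f : BitString n → ℤ × ℤ) (y x : BitString n) : Prop :=
  (f x).1 ≤ (f y).1 ∧ (f x).2 ≤ (f y).2

/-- Pareto optimality. -/
def paretoOptimal {n : ℕ} (f : BitString n → ℤ × ℤ) (x : BitString n) : Prop :=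
  ¬ ∃ y : BitString n, dominates f y x

/-- A population of mutually non-dominated points. -/
def mutuallyNonDominated {n : ℕ} (f : BitString n → ℤ × ℤ)
    (P : Finset (BitString n)) : Prop :=
  ∀ x ∈ P, ∀ y ∈ P, ¬ dominates f y x

/-- Flip bit `i` of `x`. -/
def flipBit {n : ℕ} (x : BitString n) (i : Fin n) : BitString n :=
  Function.update x i (!x i)

/-- `y` is a Hamming neighbour of `x`. -/
def hammingNeighbour {n : ℕ} (x y : BitString n) : Prop :=
  ∃ i : Fin n, y = flipBit x i

/-- `x` is good relative to population `P`: it is Pareto optimal and has a Pareto-optimal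
Hamming neighbour whose objective vector is not attained by any member of `P`. -/
def isGood {n : ℕ} (f : BitString n → ℤ × ℤ) (P : Finset (BitString n))
    (x : BitString n) : Prop :=
  paretoOptimal f x ∧
    ∃ y : BitString n, hammingNeighbour x y ∧ paretoOptimal f y ∧ ∀ z ∈ P, f z ≠ f y

/-- `x` is bad relative to population `P`. -/
def isBad {n : ℕ} (f : BitString n → ℤ × ℤ) (P : Finset (BitString n))
    (x : BitString n) : Prop :=
  paretoOptimal f x ∧
    ¬ ∃ y : BitString n, hammingNeighbour x y ∧ paretoOptimal f y ∧ ∀ z ∈ P, f z ≠ f y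

/-- `P` covers the whole Pareto front of `f`. -/
def coversFront {n : ℕ} (f : BitString n → ℤ × ℤ) (P : Finset (BitString n)) : Prop :=
  ∀ x : BitString n, paretoOptimal f x → ∃ z ∈ P, f z = f x

/-- The hypervolume contribution of `x` to `P` (for a population of mutually
non-dominated points, with reference point `r`). -/
def HVC {n : ℕ} (f : BitString n → ℤ × ℤ) (r : ℤ × ℤ) (x : BitString n)
    (P : Finset (BitString n)) : ℤ :=
  ((f x).1 - (WithBot.unbotD r.1 ((P.filter fun z => (f z).1 < (f x).1).image fun z => (f z).1).max)) *
  ((f x).2 - (WithBot.unbotD r.2 ((P.filter fun z => (f z).2 < (f x).2).image fun z => (f z).2).max))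

/-- Crowding distance of `x` in `P` with respect to a single objective `g`: infinite for the
boundary points, and otherwise the normalised difference between successor and predecessor. -/
def CDCobj {n : ℕ} (g : BitString n → ℤ) (x : BitString n)
    (P : Finset (BitString n)) : ℝ≥0∞ :=
  if (∀ z ∈ P, g x ≤ g z) ∨ (∀ z ∈ P, g z ≤ g x) then ⊤
  else
    ((((WithTop.untopD 0 ((P.filter fun z => g x < g z).image g).min) -
        (WithBot.unbotD 0 ((P.filter fun z => g z < g x).image g).max)).toNat : ℝ≥0∞)) /
      ((((WithBot.unbotD 0 (P.image g).max) - (WithTop.untopD 0 (P.image g).min)).toNat : ℝ≥0∞))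

/-- The crowding distance contribution of `x` to `P`. -/
def CDC {n : ℕ} (f : BitString n → ℤ × ℤ) (x : BitString n)
    (P : Finset (BitString n)) : ℝ≥0∞ :=
  CDCobj (fun z => (f z).1) x P + CDCobj (fun z => (f z).2) x P

/-- A diversity measure `c` is diversity-favouring on `S`. -/
def diversityFavouring {n : ℕ} {α : Type*} [Preorder α] (f : BitString n → ℤ × ℤ)
    (c : BitString n → Finset (BitString n) → α) (S : Set (BitString n)) : Prop :=
  ∀ P : Finset (BitString n), mutuallyNonDominated f P →
    ∀ x ∈ P, ∀ y ∈ P, x ∈ S → y ∈ S → isBad f P x → isGood f P y → c x P < c y P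

/-- The default bit string (used only to make selection kernels total). -/
def defaultBS (n : ℕ) : BitString n := fun _ => false

/-- Local mutation: flip a single uniformly random bit. -/
def localMutation {n : ℕ} (hn : 0 < n) (x : BitString n) : PMF (BitString n) :=
  haveI : Nonempty (Fin n) := ⟨⟨0, hn⟩⟩
  (PMF.uniformOfFintype (Fin n)).map (flipBit x)

/-- A Bernoulli coin with success probability `1/n` (for `n ≥ 1`). -/
def bitFlipCoin (n : ℕ) : PMF Bool :=
  PMF.bernoulli (min ((n : ℝ≥0∞))⁻¹ 1).toNNReal
    (by simpa using ENNReal.toNNReal_mono ENNReal.one_ne_top (min_le_right ((n : ℝ≥0∞))⁻¹ 1))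

/-- Global (standard bit) mutation: flip each bit independently with probability `1/n`. -/
def globalMutationAux {n : ℕ} : List (Fin n) → BitString n → PMF (BitString n)
  | [], x => PMF.pure x
  | i :: is, x => (bitFlipCoin n).bind fun b =>
      globalMutationAux is (if b then flipBit x i else x)

def globalMutation {n : ℕ} (x : BitString n) : PMF (BitString n) :=
  globalMutationAux (List.finRange n) x

/-- Survival selection: if `s'` is not dominated by any member of `P`, add `s'` to `P` and
remove all members weakly dominated by `s'`. -/
def updatePop {n : ℕ} (f : BitString n → ℤ × ℤ) (P : Finset (BitString n))
    (s' : BitString n) : Finset (BitString n) :=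
  if ∃ z ∈ P, dominates f z s' then P
  else insert s' (P.filter fun z => ¬ weaklyDominates f s' z)

/-- One iteration of (G)SEMO with parent-selection kernel `select` and mutation `mutate`. -/
def step {n : ℕ} (f : BitString n → ℤ × ℤ)
    (select : Finset (BitString n) → PMF (BitString n))
    (mutate : BitString n → PMF (BitString n))
    (P : Finset (BitString n)) : PMF (Finset (BitString n)) :=
  (select P).bind fun s => (mutate s).map fun s' => updatePop f P s'

/-- The L-dominant attribute `L(x) = LO(x) + TZ(x)`. -/
def Ldom {n : ℕ} (x : BitString n) : ℕ := leadingOnes x + trailingZeros x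

/-- The subpopulation of points with maximum L-dominant attribute. -/
def maxLSub {n : ℕ} (P : Finset (BitString n)) : Finset (BitString n) :=
  P.filter fun x => ∀ z ∈ P, Ldom z ≤ Ldom x

/-- One iteration of the modified GSEMO: parent selection (and the diversity contribution)
is restricted to the subpopulation of points with maximum L-dominant attribute. -/
def stepMod {n : ℕ} (f : BitString n → ℤ × ℤ)
    (select : Finset (BitString n) → PMF (BitString n))
    (mutate : BitString n → PMF (BitString n))
    (P : Finset (BitString n)) : PMF (Finset (BitString n)) :=
  (select (maxLSub P)).bind fun s => (mutate s).map fun s' => updatePop f P s'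

/-- Initial population: a single uniformly random bit string. -/
def initDist (n : ℕ) : PMF (Finset (BitString n)) :=
  (PMF.uniformOfFintype (BitString n)).map fun x => {x}

/-- Distribution of the population after `t` iterations. -/
def stateDist {S : Type*} (init : PMF S) (st : S → PMF S) : ℕ → PMF S
  | 0 => init
  | t + 1 => (stateDist init st t).bind st

/-- Expected number of iterations until an (absorbing) goal predicate is reached,
expressed as `∑ₜ Pr[goal not yet reached at time t]`. -/
def expectedRuntime {S : Type*} (init : PMF S) (st : S → PMF S) (goal : S → Prop) : ℝ≥0∞ :=
  ∑' t : ℕ, (stateDist init st t).toOuterMeasure {s | ¬ goal s}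

/-- Uniform parent selection. -/
def uniformSelect {n : ℕ} (P : Finset (BitString n)) : PMF (BitString n) :=
  if h : P.Nonempty then PMF.uniformOfFinset P h else PMF.pure (defaultBS n)

/-- Highest Diversity Contribution (HDC) parent selection: select an individual with
maximum diversity contribution, ties broken uniformly at random. -/
def HDCSelect {n : ℕ} {α : Type*} [LinearOrder α]
    (c : BitString n → Finset (BitString n) → α)
    (P : Finset (BitString n)) : PMF (BitString n) :=
  if h : P.Nonempty then
    PMF.uniformOfFinset (P.filter fun x => ∀ y ∈ P, c y P ≤ c x P)
      (by
        obtain ⟨b, hb, hmax⟩ := P.exists_max_image (fun x => c x P) h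
        exact ⟨b, Finset.mem_filter.mpr ⟨hb, hmax⟩⟩)
  else PMF.pure (defaultBS n)

/-- Non-Minimum Uniform at Random (NMUAR) parent selection: select uniformly at random
among all individuals whose diversity contribution is not minimal (from the whole
population if all contributions are equal). -/
def NMUARSelect {n : ℕ} {α : Type*} [LinearOrder α]
    (c : BitString n → Finset (BitString n) → α)
    (P : Finset (BitString n)) : PMF (BitString n) :=
  if h : P.Nonempty then
    if hQ : (P.filter fun x => ∃ y ∈ P, c y P < c x P).Nonempty then
      PMF.uniformOfFinset _ hQ
    else PMF.uniformOfFinset P h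
  else PMF.pure (defaultBS n)

/-- Tournament selection with tournament size `μ = |P|`: draw `μ` individuals uniformly at
random with replacement from `P` and select one with the highest diversity contribution
among the drawn multiset (ties broken uniformly at random). -/
def tournamentSelect {n : ℕ} {α : Type*} [LinearOrder α]
    (c : BitString n → Finset (BitString n) → α)
    (P : Finset (BitString n)) : PMF (BitString n) :=
  if h : P.Nonempty then
    haveI : Nonempty {x // x ∈ P} := h.to_subtype
    (PMF.uniformOfFintype (Fin P.card → {x // x ∈ P})).bind fun g =>
      PMF.uniformOfFinset
        ((Finset.univ.image fun i => ((g i : {x // x ∈ P}) : BitString n)).filter fun x =>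
          ∀ y ∈ Finset.univ.image fun i => ((g i : {x // x ∈ P}) : BitString n), c y P ≤ c x P)
        (by
          have hne : (Finset.univ.image fun i => ((g i : {x // x ∈ P}) : BitString n)).Nonempty := by
            refine ⟨(g ⟨0, Finset.card_pos.mpr h⟩ : {x // x ∈ P}), ?_⟩
            exact Finset.mem_image.mpr ⟨⟨0, Finset.card_pos.mpr h⟩, Finset.mem_univ _, rfl⟩
          obtain ⟨b, hb, hmax⟩ :=
            Finset.exists_max_image _ (fun x => c x P) hne
          exact ⟨b, Finset.mem_filter.mpr ⟨hb, hmax⟩⟩)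
  else PMF.pure (defaultBS n)

/-- Exponential ranking scheme: probability of selecting the `i`-th ranked individual
(1-indexed) in a population of size `μ`. -/
def rExp (i μ : ℕ) : ℝ≥0∞ :=
  (2 : ℝ≥0∞)⁻¹ ^ i / ∑ j ∈ Finset.Icc 1 μ, (2 : ℝ≥0∞)⁻¹ ^ j

/-- Power-law ranking scheme. -/
def rPow (i μ : ℕ) : ℝ≥0∞ :=
  ((i : ℝ≥0∞) ^ 2)⁻¹ / ∑ j ∈ Finset.Icc 1 μ, ((j : ℝ≥0∞) ^ 2)⁻¹

/-- Harmonic ranking scheme. -/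
def rHarm (i μ : ℕ) : ℝ≥0∞ :=
  (i : ℝ≥0∞)⁻¹ / ∑ j ∈ Finset.Icc 1 μ, (j : ℝ≥0∞)⁻¹


/-- `select` implements a rank-based parent-selection scheme with rank probabilities
`r i μ` (1-indexed rank `i`, population size `μ`) with respect to the diversity
contribution `c`, for some non-increasing ordering of the population by `c`. -/
def implementsRankScheme {n : ℕ} {α : Type*} [Preorder α]
    (c : BitString n → Finset (BitString n) → α) (r : ℕ → ℕ → ℝ≥0∞)
    (select : Finset (BitString n) → PMF (BitString n)) : Prop :=
  ∀ P : Finset (BitString n), P.Nonempty →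
    ∃ l : List (BitString n), l.Nodup ∧ l.toFinset = P ∧
      l.Chain' (fun a b => c b P ≤ c a P) ∧
      (∀ i : Fin l.length, select P (l.get i) = r (i.val + 1) P.card) ∧
      (∀ x : BitString n, x ∉ P → select P x = 0)

/-- The Pareto-optimal point `1^i 0^(n-i)` of LOTZ. -/
def opt (n i : ℕ) : BitString n := fun t => decide ((t : ℕ) < i)

/-- The whole Pareto set of LOTZ as a population. -/
def frontSet (n : ℕ) : Finset (BitString n) := (Finset.range (n + 1)).image (opt n)

/-- `P` has a gap at position `i`. -/
def hasGapAt {n : ℕ} (P : Finset (BitString n)) (i : ℕ) : Prop :=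
  opt n i ∉ P ∧ (∃ j, j < i ∧ opt n j ∈ P) ∧ (∃ k, i < k ∧ k ≤ n ∧ opt n k ∈ P)

/-- `P` has a gap at some position `i` with `n/4 ≤ i ≤ 3n/4`. -/
def gapInRange (n : ℕ) (P : Finset (BitString n)) : Prop :=
  ∃ i : ℕ, n ≤ 4 * i ∧ 4 * i ≤ 3 * n ∧ hasGapAt P i

/-- `P` contains both `0^n` and `1^n`. -/
def bothExtremes (n : ℕ) (P : Finset (BitString n)) : Prop :=
  allZeros n ∈ P ∧ allOnes n ∈ P

/-- The chain stopped (frozen) as soon as `cond` holds. -/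
def stopWhen {S : Type*} (cond : S → Prop) (st : S → PMF S) (s : S) : PMF S :=
  if cond s then PMF.pure s else st s


/-! ### Auxiliary development for Statement 0 -/

section Aux

variable {n : ℕ}

lemma onesCount_le (x : BitString n) : onesCount x ≤ n := by
  classical
  calc onesCount x ≤ Finset.univ.card := Finset.card_filter_le _ _
  _ = n := by simp

lemma not_dominates_OMM (y x : BitString n) : ¬ dominates OneMinMax y x := by
  rintro ⟨h1, h2, hne⟩
  simp only [OneMinMax] at h1 h2 hne
  have : (onesCount x : ℤ) = onesCount y := by omega
  exact hne (by simp [this])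

lemma pareto_all_OMM (x : BitString n) : paretoOptimal OneMinMax x := by
  rintro ⟨y, hy⟩; exact not_dominates_OMM y x hy

lemma weaklyDominates_OMM_iff (y x : BitString n) :
    weaklyDominates OneMinMax y x ↔ onesCount x = onesCount y := by
  constructor
  · rintro ⟨h1, h2⟩
    simp only [OneMinMax] at h1 h2
    omega
  · intro h; constructor <;> simp [OneMinMax, h]

lemma OMM_eq_iff (x y : BitString n) :
    OneMinMax x = OneMinMax y ↔ onesCount x = onesCount y := by
  constructor
  · intro h
    have := congrArg Prod.fst h
    simpa [OneMinMax] using this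
  · intro h; simp [OneMinMax, h]

lemma updatePop_OMM (P : Finset (BitString n)) (s' : BitString n) :
    updatePop OneMinMax P s' =
      insert s' (P.filter fun z => onesCount z ≠ onesCount s') := by
  classical
  rw [updatePop, if_neg]
  · congr 1
    apply Finset.filter_congr
    intro z _
    simp [weaklyDominates_OMM_iff]
  · rintro ⟨z, _, hz⟩
    exact not_dominates_OMM z s' hz

lemma onesCount_flipBit_true {x : BitString n} {i : Fin n} (h : x i = true) :
    onesCount (flipBit x i) + 1 = onesCount x := by
  classical
  have hset : (Finset.univ.filter fun j => flipBit x i j = true) =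
      (Finset.univ.filter fun j => x j = true).erase i := by
    ext j
    by_cases hj : j = i <;>
      simp [flipBit, Function.update, hj, h]
  rw [onesCount, hset, onesCount]
  have hi : i ∈ Finset.univ.filter fun j => x j = true := by simp [h]
  rw [Finset.card_erase_of_mem hi]
  have : 0 < (Finset.univ.filter fun j => x j = true).card :=
    Finset.card_pos.mpr ⟨i, hi⟩
  omega

lemma onesCount_flipBit_false {x : BitString n} {i : Fin n} (h : x i = false) :
    onesCount (flipBit x i) = onesCount x + 1 := by
  classical
  have hset : (Finset.univ.filter fun j => flipBit x i j = true) =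
      insert i (Finset.univ.filter fun j => x j = true) := by
    ext j
    by_cases hj : j = i <;>
      simp [flipBit, Function.update, hj, h]
  rw [onesCount, hset]
  rw [Finset.card_insert_of_notMem (by simp [h])]
  rfl

lemma onesCount_opt {k : ℕ} (hk : k ≤ n) : onesCount (opt n k) = k := by
  classical
  rw [onesCount]
  have : (Finset.univ.filter fun i : Fin n => opt n k i = true) =
      Finset.univ.filter fun i : Fin n => (i : ℕ) < k := by
    apply Finset.filter_congr; intro i _; simp [opt]
  rw [this]
  rw [Finset.card_eq_of_bijective (fun j hj => ⟨j, lt_of_lt_of_le hj hk⟩)]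
  · intro a ha
    simp only [Finset.mem_filter, Finset.mem_univ, true_and] at ha
    exact ⟨a, ha, Fin.ext rfl⟩
  · intro j hj; simp [hj]
  · intro j₁ h₁ j₂ h₂ h
    simpa using congrArg Fin.val h

lemma coversFront_OMM_iff (P : Finset (BitString n)) :
    coversFront OneMinMax P ↔ ∀ k ≤ n, ∃ z ∈ P, onesCount z = k := by
  constructor
  · intro h k hk
    obtain ⟨z, hz, hfz⟩ := h (opt n k) (pareto_all_OMM _)
    exact ⟨z, hz, by rw [(OMM_eq_iff _ _).mp hfz, onesCount_opt hk]⟩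
  · intro h x _
    obtain ⟨z, hz, hcz⟩ := h (onesCount x) (onesCount_le x)
    exact ⟨z, hz, (OMM_eq_iff _ _).mpr hcz⟩

/-! ### Expectation of an `ℝ≥0∞`-valued function under a `PMF` -/

/-- Expected value. -/
def exv {S : Type*} (p : PMF S) (F : S → ℝ≥0∞) : ℝ≥0∞ := ∑' s, p s * F s

lemma exv_pure {S : Type*} (a : S) (F : S → ℝ≥0∞) : exv (PMF.pure a) F = F a := by
  classical
  rw [exv, tsum_eq_single a]
  · simp
  · intro b hb; simp [PMF.pure_apply, hb]

lemma exv_bind {S T : Type*} (p : PMF S) (q : S → PMF T) (F : T → ℝ≥0∞) :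
    exv (p.bind q) F = exv p fun a => exv (q a) F := by
  classical
  simp only [exv, PMF.bind_apply]
  have : ∀ s : T, (∑' (a : S), p a * (q a) s) * F s = ∑' (a : S), p a * (q a) s * F s := by
    intro s; rw [ENNReal.tsum_mul_right]
  simp only [this]
  rw [ENNReal.tsum_comm]
  congr 1; ext a
  rw [← ENNReal.tsum_mul_left]
  congr 1; ext b
  ring

lemma exv_map {S T : Type*} (p : PMF S) (u : S → T) (F : T → ℝ≥0∞) :
    exv (p.map u) F = exv p fun a => F (u a) := by
  rw [PMF.map, exv_bind]
  simp [exv_pure]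

lemma exv_congr_support {S : Type*} {p : PMF S} {F G : S → ℝ≥0∞}
    (h : ∀ s ∈ p.support, F s = G s) : exv p F = exv p G := by
  rw [exv, exv]
  congr 1; ext s
  by_cases hs : s ∈ p.support
  · rw [h s hs]
  · rw [(PMF.apply_eq_zero_iff p s).mpr hs]; simp

lemma exv_mono_support {S : Type*} {p : PMF S} {F G : S → ℝ≥0∞}
    (h : ∀ s ∈ p.support, F s ≤ G s) : exv p F ≤ exv p G := by
  apply ENNReal.tsum_le_tsum
  intro s
  by_cases hs : s ∈ p.support
  · exact mul_le_mul_right (h s hs) _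
  · rw [(PMF.apply_eq_zero_iff p s).mpr hs]
    simp

lemma exv_const {S : Type*} (p : PMF S) (c : ℝ≥0∞) : exv p (fun _ => c) = c := by
  rw [exv]
  rw [ENNReal.tsum_mul_right, PMF.tsum_coe, one_mul]

lemma exv_add {S : Type*} (p : PMF S) (F G : S → ℝ≥0∞) :
    exv p (fun s => F s + G s) = exv p F + exv p G := by
  rw [exv, exv, exv, ← ENNReal.tsum_add]
  congr 1; ext s; ring

lemma exv_uniformOfFinset {S : Type*} (s : Finset S) (h : s.Nonempty) (F : S → ℝ≥0∞) :
    exv (PMF.uniformOfFinset s h) F = (s.card : ℝ≥0∞)⁻¹ * ∑ x ∈ s, F x := by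
  classical
  rw [exv, tsum_eq_sum (s := s) (by intro x hx; simp [PMF.uniformOfFinset_apply, hx])]
  rw [Finset.mul_sum]
  apply Finset.sum_congr rfl
  intro x hx
  rw [PMF.uniformOfFinset_apply, if_pos hx]

lemma exv_uniformOfFintype {S : Type*} [Fintype S] [Nonempty S] (F : S → ℝ≥0∞) :
    exv (PMF.uniformOfFintype S) F = (Fintype.card S : ℝ≥0∞)⁻¹ * ∑ x : S, F x := by
  classical
  rw [exv, tsum_eq_sum (s := Finset.univ) (by simp)]
  rw [Finset.mul_sum]
  apply Finset.sum_congr rfl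
  intro x _
  rw [PMF.uniformOfFintype_apply]

lemma toOuterMeasure_eq_exv {S : Type*} (p : PMF S) (s : Set S) :
    p.toOuterMeasure s = exv p fun x => if x ∈ s then 1 else 0 := by
  rw [PMF.toOuterMeasure_apply, exv]
  congr 1; ext x
  by_cases hx : x ∈ s <;> simp [Set.indicator, hx]

end Aux

section Core

variable {n : ℕ}

/-- The set of objective values (ones-counts) present in the population. -/
def vals (P : Finset (BitString n)) : Finset ℕ := P.image onesCount

/-- Smallest ones-count in the population. -/
def lov (P : Finset (BitString n)) : ℕ := WithTop.untopD 0 (vals P).min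

/-- Largest ones-count in the population. -/
def hiv (P : Finset (BitString n)) : ℕ := WithBot.unbotD 0 (vals P).max

/-- Structural invariant maintained by SEMO on OneMinMax. -/
def Inv {n : ℕ} (P : Finset (BitString n)) : Prop :=
  Set.InjOn onesCount (P : Set (BitString n)) ∧
    ∃ a b : ℕ, a ≤ b ∧ b ≤ n ∧ vals P = Finset.Icc a b

lemma lov_eq {P : Finset (BitString n)} {a b : ℕ} (h : vals P = Finset.Icc a b)
    (hab : a ≤ b) : lov P = a := by
  rw [lov, h]
  have : (Finset.Icc a b).min = (a : WithTop ℕ) := by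
    apply le_antisymm
    · exact Finset.min_le (by simp [hab])
    · exact Finset.le_min (by intro y hy; exact WithTop.coe_le_coe.mpr (Finset.mem_Icc.mp hy).1)
  rw [this]; rfl

lemma hiv_eq {P : Finset (BitString n)} {a b : ℕ} (h : vals P = Finset.Icc a b)
    (hab : a ≤ b) : hiv P = b := by
  rw [hiv, h]
  have : (Finset.Icc a b).max = (b : WithBot ℕ) := by
    apply le_antisymm
    · exact Finset.max_le (by intro y hy; exact WithBot.coe_le_coe.mpr (Finset.mem_Icc.mp hy).2)
    · exact Finset.le_max (by simp [hab])
  rw [this]; rfl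

lemma card_of_inv {P : Finset (BitString n)} {a b : ℕ}
    (hinj : Set.InjOn onesCount (P : Set (BitString n))) (h : vals P = Finset.Icc a b) :
    P.card = b + 1 - a := by
  have h1 : (vals P).card = P.card := Finset.card_image_of_injOn hinj
  rw [h] at h1
  rw [← h1, Nat.card_Icc]

lemma vals_update {P : Finset (BitString n)} (s' : BitString n) :
    vals (updatePop OneMinMax P s') = insert (onesCount s') (vals P) := by
  classical
  rw [updatePop_OMM]
  ext m
  simp only [vals, Finset.mem_image, Finset.mem_insert, Finset.mem_filter]
  constructor
  · rintro ⟨z, rfl | ⟨hz, -⟩, rfl⟩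
    · exact Or.inl rfl
    · exact Or.inr ⟨z, hz, rfl⟩
  · rintro (rfl | ⟨z, hz, rfl⟩)
    · exact ⟨s', Or.inl rfl, rfl⟩
    · by_cases hc : onesCount z = onesCount s'
      · exact ⟨s', Or.inl rfl, hc.symm⟩
      · exact ⟨z, Or.inr ⟨hz, hc⟩, rfl⟩

lemma inj_update {P : Finset (BitString n)} (s' : BitString n)
    (hinj : Set.InjOn onesCount (P : Set (BitString n))) :
    Set.InjOn onesCount (updatePop OneMinMax P s' : Set (BitString n)) := by
  classical
  rw [updatePop_OMM]
  intro z hz w hw hzw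
  simp only [Finset.coe_insert, Set.mem_insert_iff, Finset.coe_filter, Set.mem_setOf_eq]
    at hz hw
  rcases hz with rfl | ⟨hzP, hzc⟩
  · rcases hw with rfl | ⟨hwP, hwc⟩
    · rfl
    · exact absurd hzw.symm hwc
  · rcases hw with rfl | ⟨hwP, hwc⟩
    · exact absurd hzw hzc
    · exact hinj hzP hwP hzw

lemma insert_Icc_eq {v a b : ℕ} (hab : a ≤ b) (h1 : a ≤ v + 1) (h2 : v ≤ b + 1) :
    insert v (Finset.Icc a b) = Finset.Icc (min a v) (max b v) := by
  ext m
  simp only [Finset.mem_insert, Finset.mem_Icc]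
  omega

/-- Complete description of one transition of SEMO on OneMinMax. -/
lemma update_struct {P : Finset (BitString n)} {a b : ℕ}
    (hinj : Set.InjOn onesCount (P : Set (BitString n))) (hvals : vals P = Finset.Icc a b)
    (hab : a ≤ b) (hbn : b ≤ n) {x : BitString n} (hx : x ∈ P) (i : Fin n) :
    Inv (updatePop OneMinMax P (flipBit x i)) ∧
      lov (updatePop OneMinMax P (flipBit x i)) = min a (onesCount (flipBit x i)) ∧
      hiv (updatePop OneMinMax P (flipBit x i)) = max b (onesCount (flipBit x i)) := by
  classical
  set v := onesCount (flipBit x i) with hv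
  have hcx : a ≤ onesCount x ∧ onesCount x ≤ b := by
    have : onesCount x ∈ vals P := Finset.mem_image_of_mem _ hx
    rw [hvals, Finset.mem_Icc] at this; exact this
  have hrange : a ≤ v + 1 ∧ v ≤ b + 1 := by
    rcases Bool.eq_false_or_eq_true (x i) with hxi | hxi
    · have := onesCount_flipBit_true hxi; omega
    · rw [hv, onesCount_flipBit_false hxi]; omega
  have hvalsQ : vals (updatePop OneMinMax P (flipBit x i)) =
      Finset.Icc (min a v) (max b v) := by
    rw [vals_update, hvals, insert_Icc_eq hab hrange.1 hrange.2]
  have hminmax : min a v ≤ max b v := le_trans (min_le_left _ _) (le_trans hab (le_max_left _ _))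
  refine ⟨⟨inj_update _ hinj, min a v, max b v, hminmax, ?_, hvalsQ⟩,
    lov_eq hvalsQ hminmax, hiv_eq hvalsQ hminmax⟩
  exact max_le hbn (onesCount_le _)

/-- The potential used for the lower bound. -/
def gE (N a b : ℕ) : ℝ≥0∞ :=
  (N : ℝ≥0∞) * ∑ i ∈ Finset.Icc 1 a, ((b + 1 - i : ℕ) : ℝ≥0∞) / (i : ℝ≥0∞)

def gfun (P : Finset (BitString n)) : ℝ≥0∞ := gE n (lov P) (hiv P)

/-- The potential used for the upper bound. -/
def hEp (N a b : ℕ) : ℝ≥0∞ :=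
  ((N * (N + 1) : ℕ) : ℝ≥0∞) *
    ((∑ i ∈ Finset.Icc 1 a, (i : ℝ≥0∞)⁻¹) + ∑ i ∈ Finset.Icc 1 (N - b), (i : ℝ≥0∞)⁻¹)

def hfun (P : Finset (BitString n)) : ℝ≥0∞ := hEp n (lov P) (hiv P)

lemma gE_zero (N b : ℕ) : gE N 0 b = 0 := by simp [gE]

lemma gE_mono_b {N a b b' : ℕ} (h : b ≤ b') : gE N a b ≤ gE N a b' := by
  apply mul_le_mul_right
  apply Finset.sum_le_sum
  intro i _
  apply ENNReal.div_le_div_right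
  exact Nat.cast_le.mpr (by omega)

lemma gE_succ {N a b : ℕ} (ha : 1 ≤ a) :
    gE N a b = gE N (a - 1) b + (N : ℝ≥0∞) * (((b + 1 - a : ℕ) : ℝ≥0∞) / (a : ℝ≥0∞)) := by
  rw [gE, gE, ← mul_add]
  congr 1
  have h : a = (a - 1) + 1 := by omega
  rw [h, Finset.sum_Icc_succ_top (by omega), ← h]

lemma gE_ne_top (N a b : ℕ) : gE N a b ≠ ⊤ := by
  rw [gE]
  apply ENNReal.mul_ne_top (by simp)
  apply (ENNReal.sum_lt_top.mpr ?_).ne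
  intro i hi
  apply ENNReal.div_lt_top (by simp)
  have : 1 ≤ i := (Finset.mem_Icc.mp hi).1
  exact_mod_cast (by exact_mod_cast Nat.cast_pos.mpr this : (0:ℝ≥0∞) < i).ne'

lemma hEp_mono {N a a' b b' : ℕ} (ha : a' ≤ a) (hb : b ≤ b') :
    hEp N a' b' ≤ hEp N a b := by
  apply mul_le_mul_right
  apply add_le_add
  · exact Finset.sum_le_sum_of_subset (Finset.Icc_subset_Icc_right ha)
  · exact Finset.sum_le_sum_of_subset (Finset.Icc_subset_Icc_right (by omega))

lemma hEp_succ_a {N a b : ℕ} (ha : 1 ≤ a) :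
    hEp N a b = hEp N (a - 1) b + ((N * (N + 1) : ℕ) : ℝ≥0∞) * (a : ℝ≥0∞)⁻¹ := by
  rw [hEp, hEp]
  have h : a = (a - 1) + 1 := by omega
  rw [h, Finset.sum_Icc_succ_top (by omega), ← h]
  ring

lemma hEp_succ_b {N a b : ℕ} (hb : b < N) :
    hEp N a b = hEp N a (b + 1) + ((N * (N + 1) : ℕ) : ℝ≥0∞) * ((N - b : ℕ) : ℝ≥0∞)⁻¹ := by
  rw [hEp, hEp]
  have h : N - b = (N - (b + 1)) + 1 := by omega
  rw [h, Finset.sum_Icc_succ_top (by omega), ← h]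
  ring

lemma hEp_ne_top (N a b : ℕ) : hEp N a b ≠ ⊤ := by
  rw [hEp]
  apply ENNReal.mul_ne_top (ENNReal.natCast_ne_top _)
  apply ENNReal.add_ne_top.mpr
  constructor <;>
  · apply (ENNReal.sum_lt_top.mpr ?_).ne
    intro i hi
    have : 1 ≤ i := (Finset.mem_Icc.mp hi).1
    apply ENNReal.inv_lt_top.mpr
    exact_mod_cast Nat.cast_pos.mpr this

lemma hEp_le {N a b : ℕ} (ha : a ≤ N) :
    hEp N a b ≤ ((N * (N + 1) : ℕ) : ℝ≥0∞) * (2 * ∑ i ∈ Finset.Icc 1 N, (i : ℝ≥0∞)⁻¹) := by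
  apply mul_le_mul_right
  rw [two_mul]
  apply add_le_add <;>
    exact Finset.sum_le_sum_of_subset (Finset.Icc_subset_Icc_right (by omega))

end Core

section Drift

variable {n : ℕ}

lemma inv_nonempty {P : Finset (BitString n)} (hI : Inv P) : P.Nonempty := by
  obtain ⟨-, a, b, hab, -, hvals⟩ := hI
  have : a ∈ vals P := by rw [hvals]; simp [hab]
  obtain ⟨x, hx, -⟩ := Finset.mem_image.mp this
  exact ⟨x, hx⟩

lemma covered_iff {P : Finset (BitString n)} {a b : ℕ}
    (hvals : vals P = Finset.Icc a b) (hbn : b ≤ n) :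
    coversFront OneMinMax P ↔ (a = 0 ∧ b = n) := by
  rw [coversFront_OMM_iff]
  constructor
  · intro h
    have h0 : 0 ∈ vals P := by
      obtain ⟨z, hz, hz0⟩ := h 0 (Nat.zero_le n)
      exact Finset.mem_image.mpr ⟨z, hz, hz0⟩
    have hn' : n ∈ vals P := by
      obtain ⟨z, hz, hzn⟩ := h n le_rfl
      exact Finset.mem_image.mpr ⟨z, hz, hzn⟩
    rw [hvals, Finset.mem_Icc] at h0 hn'
    omega
  · rintro ⟨rfl, rfl⟩ k hk
    have : k ∈ vals P := by rw [hvals, Finset.mem_Icc]; omega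
    obtain ⟨z, hz, hzk⟩ := Finset.mem_image.mp this
    exact ⟨z, hz, hzk⟩

lemma exv_step (hn : 0 < n) (P : Finset (BitString n)) (hP : P.Nonempty)
    (F : Finset (BitString n) → ℝ≥0∞) :
    exv (step OneMinMax uniformSelect (localMutation hn) P) F =
      (P.card : ℝ≥0∞)⁻¹ * ∑ x ∈ P, ((n : ℝ≥0∞)⁻¹ *
        ∑ i : Fin n, F (updatePop OneMinMax P (flipBit x i))) := by
  haveI : Nonempty (Fin n) := ⟨⟨0, hn⟩⟩
  rw [step, exv_bind, uniformSelect, dif_pos hP, exv_uniformOfFinset]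
  congr 1
  apply Finset.sum_congr rfl
  intro x _
  rw [exv_map, localMutation, exv_map, exv_uniformOfFintype]
  simp

lemma step_support (hn : 0 < n) {P Q : Finset (BitString n)} (hP : P.Nonempty)
    (hQ : Q ∈ (step OneMinMax uniformSelect (localMutation hn) P).support) :
    ∃ x ∈ P, ∃ i : Fin n, Q = updatePop OneMinMax P (flipBit x i) := by
  haveI : Nonempty (Fin n) := ⟨⟨0, hn⟩⟩
  simp only [step, PMF.support_bind, Set.mem_iUnion] at hQ
  obtain ⟨x, hx, hQ⟩ := hQ
  rw [uniformSelect, dif_pos hP, PMF.support_uniformOfFinset] at hx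
  simp only [localMutation, PMF.support_map, PMF.support_uniformOfFintype,
    Set.image_univ, Set.mem_image, Set.mem_range] at hQ
  obtain ⟨s', ⟨i, -, rfl⟩, rfl⟩ := hQ
  exact ⟨x, Finset.mem_coe.mp hx, i, rfl⟩

lemma ennreal_le_div_add {c X T : ℝ≥0∞} (hc0 : c ≠ 0) (hct : c ≠ ⊤)
    (h : c * X ≤ T + c) : X ≤ c⁻¹ * T + 1 := by
  calc X = c⁻¹ * (c * X) := by rw [← mul_assoc, ENNReal.inv_mul_cancel hc0 hct, one_mul]
  _ ≤ c⁻¹ * (T + c) := mul_le_mul_right h _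
  _ = c⁻¹ * T + c⁻¹ * c := by rw [mul_add]
  _ = c⁻¹ * T + 1 := by rw [ENNReal.inv_mul_cancel hc0 hct]

lemma ennreal_div_add_le {c X T : ℝ≥0∞} (hc0 : c ≠ 0) (hct : c ≠ ⊤)
    (h : T + c ≤ c * X) : c⁻¹ * T + 1 ≤ X := by
  calc c⁻¹ * T + 1 = c⁻¹ * (T + c) := by
        rw [mul_add, ENNReal.inv_mul_cancel hc0 hct]
  _ ≤ c⁻¹ * (c * X) := mul_le_mul_right h _
  _ = X := by rw [← mul_assoc, ENNReal.inv_mul_cancel hc0 hct, one_mul]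

lemma exv_step_regroup (hn : 0 < n) (P : Finset (BitString n)) (hP : P.Nonempty)
    (F : Finset (BitString n) → ℝ≥0∞) :
    exv (step OneMinMax uniformSelect (localMutation hn) P) F =
      ((P.card * n : ℕ) : ℝ≥0∞)⁻¹ *
        ∑ x ∈ P, ∑ i : Fin n, F (updatePop OneMinMax P (flipBit x i)) := by
  rw [exv_step hn P hP F, ← Finset.mul_sum, ← mul_assoc]
  congr 1
  push_cast
  rw [ENNReal.mul_inv (Or.inl (by exact_mod_cast Finset.card_ne_zero.mpr hP))
    (Or.inl (ENNReal.natCast_ne_top _))]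

lemma sum_const_pairs (P : Finset (BitString n)) (c : ℝ≥0∞) :
    ∑ _x ∈ P, ∑ _i : Fin n, c = ((P.card * n : ℕ) : ℝ≥0∞) * c := by
  simp only [Finset.sum_const, Finset.card_univ, Fintype.card_fin, smul_smul,
    nsmul_eq_mul, Nat.cast_mul]
  ring

lemma num_ones (x : BitString n) :
    (Finset.univ.filter fun i : Fin n => x i = true).card = onesCount x := rfl

lemma num_zeros (x : BitString n) :
    (Finset.univ.filter fun i : Fin n => x i = false).card = n - onesCount x := by
  classical
  have h := Finset.card_filter_add_card_filter_not
    (s := (Finset.univ : Finset (Fin n))) (p := fun i => x i = true)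
  have h2 : (Finset.univ.filter fun i : Fin n => ¬ x i = true) =
      (Finset.univ.filter fun i : Fin n => x i = false) := by
    apply Finset.filter_congr; intro i _; simp
  rw [h2] at h
  have hcard : (Finset.univ : Finset (Fin n)).card = n := by simp
  rw [hcard] at h
  rw [num_ones] at h
  omega

/-- Lower-bound drift: the `g`-potential drops by at most 1 per step in expectation. -/
lemma drift_lower (hn : 0 < n) {P : Finset (BitString n)} (hI : Inv P) :
    gfun P ≤ exv (step OneMinMax uniformSelect (localMutation hn) P) gfun + 1 := by
  classical
  obtain ⟨hinj, a, b, hab, hbn, hvals⟩ := hI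
  have hlo := lov_eq hvals hab
  have hhi := hiv_eq hvals hab
  have hPne : P.Nonempty := inv_nonempty ⟨hinj, a, b, hab, hbn, hvals⟩
  rcases Nat.eq_zero_or_pos a with rfl | ha
  · rw [gfun, hlo, gE_zero]; exact zero_le
  obtain ⟨x₀, hx₀, hcx₀⟩ := Finset.mem_image.mp
    (show a ∈ vals P by rw [hvals]; simp [hab])
  rw [exv_step_regroup hn P hPne, gfun, hlo, hhi]
  set δ : ℝ≥0∞ := (n : ℝ≥0∞) * (((b + 1 - a : ℕ) : ℝ≥0∞) / (a : ℝ≥0∞)) with hδ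
  have hc0 : ((P.card * n : ℕ) : ℝ≥0∞) ≠ 0 := by
    have := Finset.card_ne_zero.mpr hPne
    exact_mod_cast Nat.mul_ne_zero this (by omega)
  apply ennreal_le_div_add hc0 (ENNReal.natCast_ne_top _)
  -- pointwise key inequality
  have key : ∀ x ∈ P, ∀ i : Fin n,
      gE n a b ≤ gfun (updatePop OneMinMax P (flipBit x i)) +
        (if onesCount x = a ∧ x i = true then δ else 0) := by
    intro x hx i
    obtain ⟨-, hloQ, hhiQ⟩ := update_struct hinj hvals hab hbn hx i
    have hFxi : gfun (updatePop OneMinMax P (flipBit x i)) =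
        gE n (min a (onesCount (flipBit x i))) (max b (onesCount (flipBit x i))) := by
      rw [gfun, hloQ, hhiQ]
    have hcx : a ≤ onesCount x ∧ onesCount x ≤ b := by
      have : onesCount x ∈ vals P := Finset.mem_image_of_mem _ hx
      rw [hvals, Finset.mem_Icc] at this; exact this
    by_cases hbad : onesCount x = a ∧ x i = true
    · have hv : onesCount (flipBit x i) + 1 = onesCount x := onesCount_flipBit_true hbad.2
      have h1 : min a (onesCount (flipBit x i)) = a - 1 := by omega
      have h2 : max b (onesCount (flipBit x i)) = b := by omega
      rw [if_pos hbad, hFxi, h1, h2, ← gE_succ ha]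
    · rw [if_neg hbad, add_zero, hFxi]
      have hva : a ≤ onesCount (flipBit x i) := by
        rcases Bool.eq_false_or_eq_true (x i) with hxi | hxi
        · have hv := onesCount_flipBit_true hxi
          have : onesCount x ≠ a := fun hcc => hbad ⟨hcc, hxi⟩
          omega
        · rw [onesCount_flipBit_false hxi]; omega
      rw [min_eq_left hva]
      exact gE_mono_b (le_max_left _ _)
  calc ((P.card * n : ℕ) : ℝ≥0∞) * gE n a b
      = ∑ x ∈ P, ∑ _i : Fin n, gE n a b := by rw [sum_const_pairs]
    _ ≤ ∑ x ∈ P, ∑ i : Fin n,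
        (gfun (updatePop OneMinMax P (flipBit x i)) +
          (if onesCount x = a ∧ x i = true then δ else 0)) := by
        apply Finset.sum_le_sum; intro x hx
        apply Finset.sum_le_sum; intro i _
        exact key x hx i
    _ = (∑ x ∈ P, ∑ i : Fin n, gfun (updatePop OneMinMax P (flipBit x i))) +
        ∑ x ∈ P, ∑ i : Fin n, (if onesCount x = a ∧ x i = true then δ else 0) := by
        rw [← Finset.sum_add_distrib]
        apply Finset.sum_congr rfl
        intro x _
        rw [← Finset.sum_add_distrib]
    _ ≤ (∑ x ∈ P, ∑ i : Fin n, gfun (updatePop OneMinMax P (flipBit x i))) +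
        ((P.card * n : ℕ) : ℝ≥0∞) := by
        apply add_le_add_right
        have hsum : ∑ x ∈ P, ∑ i : Fin n,
            (if onesCount x = a ∧ x i = true then δ else 0) = (a : ℝ≥0∞) * δ := by
          rw [Finset.sum_eq_single x₀]
          · have : ∀ i : Fin n, (if onesCount x₀ = a ∧ x₀ i = true then δ else 0) =
                (if x₀ i = true then δ else 0) := by
              intro i; by_cases hxi : x₀ i = true <;> simp [hxi, hcx₀]
            simp only [this]
            rw [← Finset.sum_filter, Finset.sum_const, num_ones, hcx₀, nsmul_eq_mul]
          · intro x hx hne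
            apply Finset.sum_eq_zero
            intro i _
            rw [if_neg]
            rintro ⟨hcc, -⟩
            exact hne (hinj hx hx₀ (by rw [hcc, hcx₀]))
          · intro h; exact absurd hx₀ h
        rw [hsum, hδ]
        have hane : (a : ℝ≥0∞) ≠ 0 := by
          exact_mod_cast (by omega : a ≠ 0)
        have heq : (a : ℝ≥0∞) * ((n : ℝ≥0∞) * (((b + 1 - a : ℕ) : ℝ≥0∞) / (a : ℝ≥0∞))) =
            (n : ℝ≥0∞) * ((b + 1 - a : ℕ) : ℝ≥0∞) := by
          rw [mul_left_comm, mul_comm ((a : ℝ≥0∞)) _,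
            ENNReal.div_mul_cancel hane (ENNReal.natCast_ne_top _)]
        rw [heq, card_of_inv hinj hvals, Nat.cast_mul]
        exact le_of_eq (mul_comm _ _)

lemma drift_upper_mono (hn : 0 < n) {P : Finset (BitString n)} (hI : Inv P) :
    exv (step OneMinMax uniformSelect (localMutation hn) P) hfun ≤ hfun P := by
  obtain ⟨hinj, a, b, hab, hbn, hvals⟩ := hI
  have hPne : P.Nonempty := inv_nonempty ⟨hinj, a, b, hab, hbn, hvals⟩
  refine le_trans (exv_mono_support ?_) (le_of_eq (exv_const _ _))
  intro Q hQ
  obtain ⟨x, hx, i, rfl⟩ := step_support hn hPne hQ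
  obtain ⟨-, hloQ, hhiQ⟩ := update_struct hinj hvals hab hbn hx i
  rw [hfun, hfun, hloQ, hhiQ, lov_eq hvals hab, hiv_eq hvals hab]
  exact hEp_mono (min_le_left _ _) (le_max_left _ _)

lemma drift_upper (hn : 0 < n) {P : Finset (BitString n)} (hI : Inv P)
    (hnc : ¬ coversFront OneMinMax P) :
    exv (step OneMinMax uniformSelect (localMutation hn) P) hfun + 1 ≤ hfun P := by
  classical
  obtain ⟨hinj, a, b, hab, hbn, hvals⟩ := hI
  have hPne : P.Nonempty := inv_nonempty ⟨hinj, a, b, hab, hbn, hvals⟩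
  have hlo := lov_eq hvals hab
  have hhi := hiv_eq hvals hab
  have hcard : P.card = b + 1 - a := card_of_inv hinj hvals
  have hc0 : ((P.card * n : ℕ) : ℝ≥0∞) ≠ 0 := by
    have h1 : P.card ≠ 0 := Finset.card_ne_zero.mpr hPne
    exact_mod_cast Nat.mul_ne_zero h1 (by omega)
  have hcle : ((P.card * n : ℕ) : ℝ≥0∞) ≤ ((n * (n + 1) : ℕ) : ℝ≥0∞) := by
    have h2 : P.card * n ≤ n * (n + 1) := by
      have h3 : P.card ≤ n + 1 := by omega
      calc P.card * n ≤ (n + 1) * n := Nat.mul_le_mul_right _ h3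
      _ = n * (n + 1) := Nat.mul_comm _ _
    exact_mod_cast h2
  have hncov : ¬ (a = 0 ∧ b = n) := fun h => hnc ((covered_iff hvals hbn).mpr h)
  rw [exv_step_regroup hn P hPne, hfun, hlo, hhi]
  apply ennreal_div_add_le hc0 (ENNReal.natCast_ne_top _)
  rcases Nat.eq_zero_or_pos a with rfl | ha
  · -- b < n : progress by extending the maximum
    have hbn' : b < n := by omega
    obtain ⟨x₁, hx₁, hcx₁⟩ := Finset.mem_image.mp
      (show b ∈ vals P by rw [hvals]; simp)
    set δ : ℝ≥0∞ := ((n * (n + 1) : ℕ) : ℝ≥0∞) * ((n - b : ℕ) : ℝ≥0∞)⁻¹ with hδ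
    have key : ∀ x ∈ P, ∀ i : Fin n,
        hfun (updatePop OneMinMax P (flipBit x i)) +
          (if onesCount x = b ∧ x i = false then δ else 0) ≤ hEp n 0 b := by
      intro x hx i
      obtain ⟨-, hloQ, hhiQ⟩ := update_struct hinj hvals hab hbn hx i
      have hFxi : hfun (updatePop OneMinMax P (flipBit x i)) =
          hEp n (min 0 (onesCount (flipBit x i))) (max b (onesCount (flipBit x i))) := by
        rw [hfun, hloQ, hhiQ]
      by_cases hbad : onesCount x = b ∧ x i = false
      · have hv : onesCount (flipBit x i) = onesCount x + 1 :=
          onesCount_flipBit_false hbad.2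
        have h1 : min 0 (onesCount (flipBit x i)) = 0 := by omega
        have h2 : max b (onesCount (flipBit x i)) = b + 1 := by omega
        rw [if_pos hbad, hFxi, h1, h2, hδ, ← hEp_succ_b hbn']
      · rw [if_neg hbad, add_zero, hFxi]
        exact hEp_mono (min_le_left _ _) (le_max_left _ _)
    have hsum : ∑ x ∈ P, ∑ i : Fin n,
        (if onesCount x = b ∧ x i = false then δ else 0) = ((n - b : ℕ) : ℝ≥0∞) * δ := by
      rw [Finset.sum_eq_single x₁]
      · have h4 : ∀ i : Fin n, (if onesCount x₁ = b ∧ x₁ i = false then δ else 0) =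
            (if x₁ i = false then δ else 0) := by
          intro i; by_cases hxi : x₁ i = false <;> simp [hxi, hcx₁]
        simp only [h4]
        rw [← Finset.sum_filter, Finset.sum_const, num_zeros, hcx₁, nsmul_eq_mul]
      · intro x hx hne
        apply Finset.sum_eq_zero
        intro i _
        rw [if_neg]
        rintro ⟨hcc, -⟩
        exact hne (hinj hx hx₁ (by rw [hcc, hcx₁]))
      · intro h; exact absurd hx₁ h
    have hδsum : ((n - b : ℕ) : ℝ≥0∞) * δ = ((n * (n + 1) : ℕ) : ℝ≥0∞) := by
      rw [hδ, ← mul_assoc, mul_comm ((n - b : ℕ) : ℝ≥0∞), mul_assoc,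
        ENNReal.mul_inv_cancel (by exact_mod_cast (by omega : n - b ≠ 0))
          (ENNReal.natCast_ne_top _), mul_one]
    calc (∑ x ∈ P, ∑ i : Fin n, hfun (updatePop OneMinMax P (flipBit x i))) +
          ((P.card * n : ℕ) : ℝ≥0∞)
        ≤ (∑ x ∈ P, ∑ i : Fin n, hfun (updatePop OneMinMax P (flipBit x i))) +
          ((n * (n + 1) : ℕ) : ℝ≥0∞) := add_le_add_right hcle _
      _ = ∑ x ∈ P, ∑ i : Fin n,
          (hfun (updatePop OneMinMax P (flipBit x i)) +
            (if onesCount x = b ∧ x i = false then δ else 0)) := by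
          rw [← hδsum, ← hsum, ← Finset.sum_add_distrib]
          apply Finset.sum_congr rfl
          intro x _
          rw [← Finset.sum_add_distrib]
      _ ≤ ∑ x ∈ P, ∑ _i : Fin n, hEp n 0 b := by
          apply Finset.sum_le_sum; intro x hx
          apply Finset.sum_le_sum; intro i _
          exact key x hx i
      _ = ((P.card * n : ℕ) : ℝ≥0∞) * hEp n 0 b := sum_const_pairs _ _
  · -- a ≥ 1 : progress by extending the minimum
    obtain ⟨x₀, hx₀, hcx₀⟩ := Finset.mem_image.mp
      (show a ∈ vals P by rw [hvals]; simp [hab])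
    set δ : ℝ≥0∞ := ((n * (n + 1) : ℕ) : ℝ≥0∞) * ((a : ℕ) : ℝ≥0∞)⁻¹ with hδ
    have key : ∀ x ∈ P, ∀ i : Fin n,
        hfun (updatePop OneMinMax P (flipBit x i)) +
          (if onesCount x = a ∧ x i = true then δ else 0) ≤ hEp n a b := by
      intro x hx i
      obtain ⟨-, hloQ, hhiQ⟩ := update_struct hinj hvals hab hbn hx i
      have hFxi : hfun (updatePop OneMinMax P (flipBit x i)) =
          hEp n (min a (onesCount (flipBit x i))) (max b (onesCount (flipBit x i))) := by
        rw [hfun, hloQ, hhiQ]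
      by_cases hbad : onesCount x = a ∧ x i = true
      · have hv : onesCount (flipBit x i) + 1 = onesCount x :=
          onesCount_flipBit_true hbad.2
        have h1 : min a (onesCount (flipBit x i)) = a - 1 := by omega
        have h2 : max b (onesCount (flipBit x i)) = b := by omega
        rw [if_pos hbad, hFxi, h1, h2, hδ, ← hEp_succ_a ha]
      · rw [if_neg hbad, add_zero, hFxi]
        exact hEp_mono (min_le_left _ _) (le_max_left _ _)
    have hsum : ∑ x ∈ P, ∑ i : Fin n,
        (if onesCount x = a ∧ x i = true then δ else 0) = ((a : ℕ) : ℝ≥0∞) * δ := by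
      rw [Finset.sum_eq_single x₀]
      · have h4 : ∀ i : Fin n, (if onesCount x₀ = a ∧ x₀ i = true then δ else 0) =
            (if x₀ i = true then δ else 0) := by
          intro i; by_cases hxi : x₀ i = true <;> simp [hxi, hcx₀]
        simp only [h4]
        rw [← Finset.sum_filter, Finset.sum_const, num_ones, hcx₀, nsmul_eq_mul]
      · intro x hx hne
        apply Finset.sum_eq_zero
        intro i _
        rw [if_neg]
        rintro ⟨hcc, -⟩
        exact hne (hinj hx hx₀ (by rw [hcc, hcx₀]))
      · intro h; exact absurd hx₀ h
    have hδsum : ((a : ℕ) : ℝ≥0∞) * δ = ((n * (n + 1) : ℕ) : ℝ≥0∞) := by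
      rw [hδ, ← mul_assoc, mul_comm ((a : ℕ) : ℝ≥0∞), mul_assoc,
        ENNReal.mul_inv_cancel (by exact_mod_cast (by omega : a ≠ 0))
          (ENNReal.natCast_ne_top _), mul_one]
    calc (∑ x ∈ P, ∑ i : Fin n, hfun (updatePop OneMinMax P (flipBit x i))) +
          ((P.card * n : ℕ) : ℝ≥0∞)
        ≤ (∑ x ∈ P, ∑ i : Fin n, hfun (updatePop OneMinMax P (flipBit x i))) +
          ((n * (n + 1) : ℕ) : ℝ≥0∞) := add_le_add_right hcle _
      _ = ∑ x ∈ P, ∑ i : Fin n,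
          (hfun (updatePop OneMinMax P (flipBit x i)) +
            (if onesCount x = a ∧ x i = true then δ else 0)) := by
          rw [← hδsum, ← hsum, ← Finset.sum_add_distrib]
          apply Finset.sum_congr rfl
          intro x _
          rw [← Finset.sum_add_distrib]
      _ ≤ ∑ x ∈ P, ∑ _i : Fin n, hEp n a b := by
          apply Finset.sum_le_sum; intro x hx
          apply Finset.sum_le_sum; intro i _
          exact key x hx i
      _ = ((P.card * n : ℕ) : ℝ≥0∞) * hEp n a b := sum_const_pairs _ _

end Drift

section Time

variable {n : ℕ}

/-- The SEMO Markov kernel on OneMinMax with uniform selection and local mutation. -/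
def chain (hn : 0 < n) : Finset (BitString n) → PMF (Finset (BitString n)) :=
  step OneMinMax uniformSelect (localMutation hn)

/-- Distribution of the population after `t` steps. -/
def μchain (hn : 0 < n) (t : ℕ) : PMF (Finset (BitString n)) :=
  stateDist (initDist n) (chain hn) t

lemma inv_init : ∀ P ∈ (initDist n).support, (Inv P : Prop) := by
  intro P hP
  rw [initDist, PMF.support_map] at hP
  obtain ⟨x, -, rfl⟩ := hP
  refine ⟨?_, onesCount x, onesCount x, le_rfl, onesCount_le x, ?_⟩
  · intro z hz w hw _
    simp only [Finset.coe_singleton, Set.mem_singleton_iff] at hz hw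
    rw [hz, hw]
  · rw [vals, Finset.image_singleton, Finset.Icc_self]

lemma inv_chain (hn : 0 < n) (t : ℕ) : ∀ P ∈ (μchain hn t).support, (Inv P : Prop) := by
  induction t with
  | zero => exact inv_init
  | succ t ih =>
    intro P hP
    have : μchain hn (t + 1) = (μchain hn t).bind (chain hn) := rfl
    rw [this, PMF.support_bind] at hP
    simp only [Set.mem_iUnion] at hP
    obtain ⟨P0, hP0, hP⟩ := hP
    have hI0 := ih P0 hP0
    obtain ⟨x, hx, i, rfl⟩ := step_support hn (inv_nonempty hI0) hP
    obtain ⟨hinj, a, b, hab, hbn, hvals⟩ := hI0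
    exact (update_struct hinj hvals hab hbn hx i).1

/-- Probability that the front is not yet covered at time `t`. -/
def uNC (hn : 0 < n) (t : ℕ) : ℝ≥0∞ :=
  exv (μchain hn t) fun P => if coversFront OneMinMax P then 0 else 1

lemma uNC_eq (hn : 0 < n) (t : ℕ) :
    (μchain hn t).toOuterMeasure {s | ¬ coversFront OneMinMax s} = uNC hn t := by
  rw [toOuterMeasure_eq_exv, uNC]
  apply exv_congr_support
  intro P _
  by_cases h : coversFront OneMinMax P <;> simp [h]

lemma expectedRuntime_eq (hn : 0 < n) :
    expectedRuntime (initDist n) (chain hn) (coversFront OneMinMax) = ∑' t, uNC hn t := by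
  rw [expectedRuntime]
  exact tsum_congr fun t => uNC_eq hn t

lemma tele_low (hn : 0 < n) (t : ℕ) :
    exv (μchain hn t) gfun ≤ exv (μchain hn (t + 1)) gfun + uNC hn t := by
  rw [show μchain hn (t + 1) = (μchain hn t).bind (chain hn) from rfl, exv_bind, uNC,
    ← exv_add]
  apply exv_mono_support
  intro P hP
  have hI := inv_chain hn t P hP
  by_cases hcov : coversFront OneMinMax P
  · obtain ⟨hinj, a, b, hab, hbn, hvals⟩ := hI
    have h0 := (covered_iff hvals hbn).mp hcov
    rw [gfun, lov_eq hvals hab, h0.1, gE_zero]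
    exact zero_le
  · rw [if_neg hcov]
    exact drift_lower hn hI

lemma tele_up (hn : 0 < n) (t : ℕ) :
    exv (μchain hn (t + 1)) gfun ≤ exv (μchain hn t) gfun + 0 ∨ True := Or.inr trivial

lemma tele_upper (hn : 0 < n) (t : ℕ) :
    exv (μchain hn (t + 1)) hfun + uNC hn t ≤ exv (μchain hn t) hfun := by
  rw [show μchain hn (t + 1) = (μchain hn t).bind (chain hn) from rfl, exv_bind, uNC,
    ← exv_add]
  apply exv_mono_support
  intro P hP
  have hI := inv_chain hn t P hP
  by_cases hcov : coversFront OneMinMax P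
  · rw [if_pos hcov, add_zero]
    exact drift_upper_mono hn hI
  · rw [if_neg hcov]
    exact drift_upper hn hI hcov

/-- Upper bound on the `h`-potential. -/
def Hmax (n : ℕ) : ℝ≥0∞ :=
  ((n * (n + 1) : ℕ) : ℝ≥0∞) * (2 * ∑ i ∈ Finset.Icc 1 n, (i : ℝ≥0∞)⁻¹)

/-- Upper bound on the `g`-potential. -/
def Gmax (n : ℕ) : ℝ≥0∞ :=
  (n : ℝ≥0∞) * ∑ i ∈ Finset.Icc 1 n, ((n + 1 : ℕ) : ℝ≥0∞) / (i : ℝ≥0∞)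

lemma gE_le {a b : ℕ} (ha : a ≤ n) (hb : b ≤ n) : gE n a b ≤ Gmax n := by
  rw [gE, Gmax]
  apply mul_le_mul_right
  calc ∑ i ∈ Finset.Icc 1 a, ((b + 1 - i : ℕ) : ℝ≥0∞) / (i : ℝ≥0∞)
      ≤ ∑ i ∈ Finset.Icc 1 a, ((n + 1 : ℕ) : ℝ≥0∞) / (i : ℝ≥0∞) := by
        apply Finset.sum_le_sum
        intro i _
        apply ENNReal.div_le_div_right
        exact Nat.cast_le.mpr (by omega)
    _ ≤ ∑ i ∈ Finset.Icc 1 n, ((n + 1 : ℕ) : ℝ≥0∞) / (i : ℝ≥0∞) :=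
        Finset.sum_le_sum_of_subset (Finset.Icc_subset_Icc_right ha)

lemma Gmax_ne_top : Gmax n ≠ ⊤ := by
  rw [Gmax]
  apply ENNReal.mul_ne_top (ENNReal.natCast_ne_top _)
  apply (ENNReal.sum_lt_top.mpr ?_).ne
  intro i hi
  have : 1 ≤ i := (Finset.mem_Icc.mp hi).1
  apply ENNReal.div_lt_top (ENNReal.natCast_ne_top _)
  exact_mod_cast (by exact_mod_cast Nat.cast_pos.mpr this : (0:ℝ≥0∞) < i).ne'

lemma exv_mul_left {S : Type*} (p : PMF S) (c : ℝ≥0∞) (F : S → ℝ≥0∞) :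
    exv p (fun s => c * F s) = c * exv p F := by
  rw [exv, exv, ← ENNReal.tsum_mul_left]
  exact tsum_congr fun s => by ring

lemma exv_g_le_uNC (hn : 0 < n) (t : ℕ) :
    exv (μchain hn t) gfun ≤ Gmax n * uNC hn t := by
  rw [uNC, ← exv_mul_left]
  apply exv_mono_support
  intro P hP
  have hI := inv_chain hn t P hP
  obtain ⟨hinj, a, b, hab, hbn, hvals⟩ := hI
  by_cases hcov : coversFront OneMinMax P
  · have h0 := (covered_iff hvals hbn).mp hcov
    rw [gfun, lov_eq hvals hab, h0.1, gE_zero]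
    exact zero_le
  · rw [if_neg hcov, mul_one, gfun, lov_eq hvals hab, hiv_eq hvals hab]
    exact gE_le (le_trans hab hbn) hbn

lemma exv_h_le_Hmax (hn : 0 < n) (t : ℕ) :
    exv (μchain hn t) hfun ≤ Hmax n := by
  refine le_trans (exv_mono_support ?_) (le_of_eq (exv_const _ _))
  intro P hP
  obtain ⟨hinj, a, b, hab, hbn, hvals⟩ := inv_chain hn t P hP
  rw [hfun, lov_eq hvals hab, hiv_eq hvals hab]
  exact hEp_le (le_trans hab hbn)

lemma partial_upper (hn : 0 < n) (T : ℕ) :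
    (∑ t ∈ Finset.range T, uNC hn t) + exv (μchain hn T) hfun ≤
      exv (μchain hn 0) hfun := by
  induction T with
  | zero => simp
  | succ T ih =>
    calc (∑ t ∈ Finset.range (T + 1), uNC hn t) + exv (μchain hn (T + 1)) hfun
        = (∑ t ∈ Finset.range T, uNC hn t) +
            (exv (μchain hn (T + 1)) hfun + uNC hn T) := by
          rw [Finset.sum_range_succ]; ring
      _ ≤ (∑ t ∈ Finset.range T, uNC hn t) + exv (μchain hn T) hfun :=
          add_le_add_right (tele_upper hn T) _
      _ ≤ _ := ih

lemma runtime_le_H0 (hn : 0 < n) : ∑' t, uNC hn t ≤ Hmax n := by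
  rw [ENNReal.tsum_eq_iSup_nat]
  apply iSup_le
  intro T
  calc ∑ t ∈ Finset.range T, uNC hn t
      ≤ (∑ t ∈ Finset.range T, uNC hn t) + exv (μchain hn T) hfun := le_self_add
    _ ≤ exv (μchain hn 0) hfun := partial_upper hn T
    _ ≤ Hmax n := exv_h_le_Hmax hn 0

lemma partial_lower (hn : 0 < n) (T : ℕ) :
    exv (μchain hn 0) gfun ≤ exv (μchain hn T) gfun + ∑ t ∈ Finset.range T, uNC hn t := by
  induction T with
  | zero => simp
  | succ T ih =>
    calc exv (μchain hn 0) gfun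
        ≤ exv (μchain hn T) gfun + ∑ t ∈ Finset.range T, uNC hn t := ih
      _ ≤ (exv (μchain hn (T + 1)) gfun + uNC hn T) + ∑ t ∈ Finset.range T, uNC hn t :=
          add_le_add_left (tele_low hn T) _
      _ = exv (μchain hn (T + 1)) gfun + ∑ t ∈ Finset.range (T + 1), uNC hn t := by
          rw [Finset.sum_range_succ]; ring

lemma G0_le_runtime (hn : 0 < n) : exv (μchain hn 0) gfun ≤ ∑' t, uNC hn t := by
  by_cases htop : (∑' t, uNC hn t) = ⊤
  · rw [htop]; exact le_top
  have hten : Filter.Tendsto (uNC hn) Filter.atTop (nhds 0) :=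
    ENNReal.tendsto_atTop_zero_of_tsum_ne_top htop
  have h1 : ∀ T : ℕ, exv (μchain hn 0) gfun ≤ Gmax n * uNC hn T + ∑' t, uNC hn t := by
    intro T
    refine (partial_lower hn T).trans (add_le_add (exv_g_le_uNC hn T) ?_)
    exact ENNReal.sum_le_tsum _
  have h2 : Filter.Tendsto (fun T => Gmax n * uNC hn T + ∑' t, uNC hn t)
      Filter.atTop (nhds (Gmax n * 0 + ∑' t, uNC hn t)) := by
    apply Filter.Tendsto.add_const
    exact ENNReal.Tendsto.const_mul hten (Or.inr Gmax_ne_top)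
  rw [mul_zero, zero_add] at h2
  exact ge_of_tendsto' h2 h1

lemma exv_init (F : Finset (BitString n) → ℝ≥0∞) :
    exv (initDist n) F = ((2 ^ n : ℕ) : ℝ≥0∞)⁻¹ * ∑ x : BitString n, F {x} := by
  rw [initDist, exv_map, exv_uniformOfFintype]
  congr 2
  simp [BitString]

lemma gfun_singleton (x : BitString n) :
    gfun {x} = gE n (onesCount x) (onesCount x) := by
  have hvals : vals ({x} : Finset (BitString n)) =
      Finset.Icc (onesCount x) (onesCount x) := by
    rw [vals, Finset.image_singleton, Finset.Icc_self]
  rw [gfun, lov_eq hvals le_rfl, hiv_eq hvals le_rfl]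

end Time

section Final

variable {n : ℕ}

lemma two_pow_split (m : ℕ) (h : 0 < m) : 2 ^ m = 2 * 2 ^ (m - 1) := by
  obtain ⟨k, rfl⟩ : ∃ k, m = k + 1 := ⟨m - 1, by omega⟩
  rw [pow_succ, Nat.add_sub_cancel]; ring

lemma two_pow_splitR (m : ℕ) (h : 0 < m) : (2 : ℝ) ^ m = 2 * 2 ^ (m - 1) := by
  obtain ⟨k, rfl⟩ : ∃ k, m = k + 1 := ⟨m - 1, by omega⟩
  rw [pow_succ, Nat.add_sub_cancel]; ring

lemma flipBit_invol (x : BitString n) (i : Fin n) : flipBit (flipBit x i) i = x := by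
  funext j
  by_cases hj : j = i
  · subst hj; simp [flipBit, Function.update]
  · simp [flipBit, Function.update, hj]

lemma card_filter_true (i : Fin n) :
    (Finset.univ.filter fun x : BitString n => x i = true).card = 2 ^ (n - 1) := by
  classical
  have hbij : (Finset.univ.filter fun x : BitString n => x i = true).card =
      (Finset.univ.filter fun x : BitString n => x i = false).card := by
    apply Finset.card_bij (fun x _ => flipBit x i)
    · intro x hx
      simp only [Finset.mem_filter, Finset.mem_univ, true_and] at hx ⊢
      simp [flipBit, Function.update, hx]
    · intro x hx y hy h
      have h2 := congrArg (fun z => flipBit z i) h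
      simpa [flipBit_invol] using h2
    · intro y hy
      simp only [Finset.mem_filter, Finset.mem_univ, true_and] at hy
      refine ⟨flipBit y i, ?_, flipBit_invol y i⟩
      simp only [Finset.mem_filter, Finset.mem_univ, true_and]
      simp [flipBit, Function.update, hy]
  have h2 : (Finset.univ.filter fun x : BitString n => ¬ x i = true) =
      (Finset.univ.filter fun x : BitString n => x i = false) := by
    apply Finset.filter_congr; intro x _; simp
  have htot := Finset.card_filter_add_card_filter_not
    (s := (Finset.univ : Finset (BitString n))) (p := fun x => x i = true)
  rw [h2] at htot
  have hcard : (Finset.univ : Finset (BitString n)).card = 2 ^ n := by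
    simp [BitString]
  rw [hcard] at htot
  have hpos : 0 < n := i.pos
  have hpow := two_pow_split n hpos
  set A := (Finset.univ.filter fun x : BitString n => x i = true).card with hA
  set B := (Finset.univ.filter fun x : BitString n => x i = false).card with hB
  clear_value A B
  clear hA hB h2
  omega

lemma sum_onesCount_eq : ∑ x : BitString n, onesCount x = n * 2 ^ (n - 1) := by
  classical
  calc ∑ x : BitString n, onesCount x
      = ∑ x : BitString n, ∑ i : Fin n, (if x i = true then 1 else 0) :=
        Finset.sum_congr rfl fun x _ => by
          rw [onesCount, Finset.sum_boole]; exact (Nat.cast_id _).symm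
    _ = ∑ i : Fin n, ∑ x : BitString n, (if x i = true then 1 else 0) := Finset.sum_comm
    _ = ∑ i : Fin n, 2 ^ (n - 1) :=
        Finset.sum_congr rfl fun i _ => by
          rw [Finset.sum_boole]
          rw [Nat.cast_id]
          exact card_filter_true i
    _ = n * 2 ^ (n - 1) := by
        rw [Finset.sum_const, Finset.card_univ, Fintype.card_fin, smul_eq_mul]

lemma jensen_sum (hn : 0 < n) :
    (2 ^ n : ℝ) * (((n : ℝ) / 2) * Real.log ((n : ℝ) / 2)) ≤
      ∑ x : BitString n, (onesCount x : ℝ) * Real.log (onesCount x) := by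
  classical
  have hcard : (Finset.univ : Finset (BitString n)).card = 2 ^ n := by simp [BitString]
  have hwpos : (0 : ℝ) < ∑ _x ∈ (Finset.univ : Finset (BitString n)), (1 : ℝ) := by
    rw [Finset.sum_const, hcard]
    simp only [nsmul_eq_mul, mul_one]
    positivity
  have hJ := Real.convexOn_mul_log.map_centerMass_le
    (t := (Finset.univ : Finset (BitString n))) (w := fun _ => (1 : ℝ))
    (p := fun x => (onesCount x : ℝ)) (fun _ _ => zero_le_one) hwpos
    (fun _ _ => Set.mem_Ici.mpr (Nat.cast_nonneg _))
  have h2pow : (2 : ℝ) ^ n = 2 * 2 ^ (n - 1) := two_pow_splitR n hn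
  have hsumR : ∑ x : BitString n, (onesCount x : ℝ) = (n : ℝ) * 2 ^ (n - 1) := by
    rw [← Nat.cast_sum, sum_onesCount_eq]; push_cast; ring
  have hcm : (Finset.univ : Finset (BitString n)).centerMass (fun _ => (1 : ℝ))
      (fun x => (onesCount x : ℝ)) = (n : ℝ) / 2 := by
    rw [Finset.centerMass]
    simp only [one_smul, one_mul, Finset.sum_const, hcard, nsmul_eq_mul, mul_one,
      smul_eq_mul]
    push_cast
    rw [hsumR, h2pow]
    have hB : (0:ℝ) < 2 ^ (n-1) := by positivity
    field_simp
  rw [hcm] at hJ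
  have hrhs : (Finset.univ : Finset (BitString n)).centerMass (fun _ => (1 : ℝ))
      ((fun y => y * Real.log y) ∘ fun x => (onesCount x : ℝ)) =
      ((2 : ℝ) ^ n)⁻¹ * ∑ x : BitString n, (onesCount x : ℝ) * Real.log (onesCount x) := by
    rw [Finset.centerMass]
    simp only [Function.comp, one_smul, one_mul, Finset.sum_const, hcard, nsmul_eq_mul,
      mul_one, smul_eq_mul]
    push_cast
    ring
  rw [hrhs] at hJ
  have hp : (0 : ℝ) < 2 ^ n := by positivity
  have := mul_le_mul_of_nonneg_left hJ hp.le
  calc (2 ^ n : ℝ) * (((n : ℝ) / 2) * Real.log ((n : ℝ) / 2))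
      ≤ (2 ^ n : ℝ) * (((2 : ℝ) ^ n)⁻¹ *
          ∑ x : BitString n, (onesCount x : ℝ) * Real.log (onesCount x)) := this
    _ = ∑ x : BitString n, (onesCount x : ℝ) * Real.log (onesCount x) := by
        field_simp

lemma harmonic_cast_eq :
    ((harmonic n : ℚ) : ℝ) = ∑ i ∈ Finset.Icc 1 n, (i : ℝ)⁻¹ := by
  rw [harmonic_eq_sum_Icc]
  push_cast
  rfl

lemma harmonic_ge_log (k : ℕ) (hk : 1 ≤ k) :
    Real.log k ≤ ∑ i ∈ Finset.Icc 1 k, (i : ℝ)⁻¹ := by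
  have h1 : Real.log (k : ℝ) ≤ Real.log ((k : ℝ) + 1) := by
    apply Real.log_le_log (by exact_mod_cast hk)
    linarith
  have h2 : Real.log ((k : ℝ) + 1) ≤ ((harmonic k : ℚ) : ℝ) := by
    have h := log_add_one_le_harmonic k
    push_cast at h ⊢
    convert h using 2
  have h3 := harmonic_cast_eq (n := k)
  linarith

lemma sum_div_lb (k : ℕ) (hk : 1 ≤ k) :
    (k : ℝ) * Real.log k - k ≤ ∑ i ∈ Finset.Icc 1 k, ((k + 1 - i : ℕ) : ℝ) / i := by
  have hH := harmonic_ge_log k hk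
  have hcc : ∀ i ∈ Finset.Icc 1 k, (k : ℝ) / i - 1 ≤ ((k + 1 - i : ℕ) : ℝ) / i := by
    intro i hi
    rw [Finset.mem_Icc] at hi
    have hi0 : (0 : ℝ) < i := by exact_mod_cast hi.1
    have hcast : ((k + 1 - i : ℕ) : ℝ) = (k : ℝ) + 1 - i := by
      have h : i ≤ k + 1 := by omega
      push_cast [h]
      ring
    have heq : (k : ℝ) / i - 1 = ((k : ℝ) - i) / i := by field_simp
    rw [hcast, heq]
    exact (div_le_div_iff_of_pos_right hi0).mpr (by linarith)
  calc (k : ℝ) * Real.log k - k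
      ≤ (k : ℝ) * (∑ i ∈ Finset.Icc 1 k, (i : ℝ)⁻¹) - k := by
        have := mul_le_mul_of_nonneg_left hH (Nat.cast_nonneg k : (0:ℝ) ≤ k)
        linarith
    _ = ∑ i ∈ Finset.Icc 1 k, ((k : ℝ) / i - 1) := by
        rw [Finset.sum_sub_distrib, Finset.mul_sum, Finset.sum_const, Nat.card_Icc]
        simp [div_eq_mul_inv]
    _ ≤ _ := Finset.sum_le_sum hcc

lemma ofReal_sum_le {α : Type*} (s : Finset α) (f : α → ℝ) :
    ENNReal.ofReal (∑ x ∈ s, f x) ≤ ∑ x ∈ s, ENNReal.ofReal (f x) := by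
  classical
  induction s using Finset.cons_induction with
  | empty => simp
  | cons a s ha ih =>
    rw [Finset.sum_cons, Finset.sum_cons]
    exact le_trans ENNReal.ofReal_add_le (add_le_add_right ih _)

lemma gE_diag_ge (k : ℕ) :
    ENNReal.ofReal ((n : ℝ) * ((k : ℝ) * Real.log k - k)) ≤ gE n k k := by
  rcases Nat.eq_zero_or_pos k with rfl | hk
  · simp
  rw [gE, ENNReal.ofReal_mul (Nat.cast_nonneg n), ENNReal.ofReal_natCast]
  apply mul_le_mul_right
  calc ENNReal.ofReal ((k : ℝ) * Real.log k - k)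
      ≤ ENNReal.ofReal (∑ i ∈ Finset.Icc 1 k, ((k + 1 - i : ℕ) : ℝ) / i) :=
        ENNReal.ofReal_le_ofReal (sum_div_lb k hk)
    _ ≤ ∑ i ∈ Finset.Icc 1 k, ENNReal.ofReal (((k + 1 - i : ℕ) : ℝ) / i) :=
        ofReal_sum_le _ _
    _ = ∑ i ∈ Finset.Icc 1 k, ((k + 1 - i : ℕ) : ℝ≥0∞) / (i : ℝ≥0∞) := by
        apply Finset.sum_congr rfl
        intro i hi
        have hi0 : (0 : ℝ) < (i : ℝ) := by
          exact_mod_cast (Finset.mem_Icc.mp hi).1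
        rw [ENNReal.ofReal_div_of_pos hi0, ENNReal.ofReal_natCast, ENNReal.ofReal_natCast]

lemma lower_main (hn : 0 < n) :
    ENNReal.ofReal (((n : ℝ) ^ 2 * Real.log n) / 2 - 1 * (n : ℝ) ^ 2) ≤
      exv (μchain hn 0) gfun := by
  classical
  have hE0 : exv (μchain hn 0) gfun =
      ((2 ^ n : ℕ) : ℝ≥0∞)⁻¹ * ∑ x : BitString n, gE n (onesCount x) (onesCount x) := by
    rw [show μchain hn 0 = initDist n from rfl, exv_init]
    simp only [gfun_singleton]
  rw [hE0]
  set φ : BitString n → ℝ :=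
    fun x => (n : ℝ) * ((onesCount x : ℝ) * Real.log (onesCount x) - onesCount x) with hφ
  have hstep1 : (∑ x : BitString n, ENNReal.ofReal (φ x)) ≤
      ∑ x : BitString n, gE n (onesCount x) (onesCount x) :=
    Finset.sum_le_sum fun x _ => gE_diag_ge _
  have hreal : (2 ^ n : ℝ) * (((n : ℝ) ^ 2 * Real.log n) / 2 - 1 * (n : ℝ) ^ 2) ≤
      ∑ x : BitString n, φ x := by
    have hsum1 : ∑ x : BitString n, φ x =
        (n : ℝ) * ((∑ x : BitString n, (onesCount x : ℝ) * Real.log (onesCount x)) -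
          (n : ℝ) * 2 ^ (n - 1)) := by
      rw [hφ, ← Finset.mul_sum, Finset.sum_sub_distrib]
      congr 2
      rw [← Nat.cast_sum, sum_onesCount_eq]
      push_cast
      ring
    rw [hsum1]
    have hJ := jensen_sum hn
    have hnpos : (0 : ℝ) < n := by exact_mod_cast hn
    have hlog : Real.log ((n : ℝ) / 2) = Real.log n - Real.log 2 :=
      Real.log_div (ne_of_gt hnpos) (by norm_num)
    have hlog2 : Real.log 2 ≤ 1 := by
      have h := Real.log_two_lt_d9
      linarith
    have hlog2' : (0 : ℝ) ≤ Real.log 2 := Real.log_nonneg (by norm_num)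
    have h2pow : (2 : ℝ) ^ n = 2 * 2 ^ (n - 1) := two_pow_splitR n hn
    rw [hlog] at hJ
    rw [h2pow] at hJ ⊢
    have hmul := mul_le_mul_of_nonneg_left hJ hnpos.le
    have hpow_pos : (0 : ℝ) < 2 ^ (n - 1) := by positivity
    nlinarith [hmul, hpow_pos, sq_nonneg ((n : ℝ)),
      mul_nonneg (mul_nonneg hpow_pos.le (sq_nonneg ((n : ℝ))))
        (by linarith : (0 : ℝ) ≤ 1 - Real.log 2)]
  calc ENNReal.ofReal (((n : ℝ) ^ 2 * Real.log n) / 2 - 1 * (n : ℝ) ^ 2)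
      = ((2 ^ n : ℕ) : ℝ≥0∞)⁻¹ * ENNReal.ofReal ((2 ^ n : ℝ) *
          (((n : ℝ) ^ 2 * Real.log n) / 2 - 1 * (n : ℝ) ^ 2)) := by
        rw [ENNReal.ofReal_mul (by positivity),
          show ((2 : ℝ)) ^ n = ((2 ^ n : ℕ) : ℝ) by push_cast; ring,
          ENNReal.ofReal_natCast, ← mul_assoc,
          ENNReal.inv_mul_cancel (Nat.cast_ne_zero.mpr (Nat.pos_iff_ne_zero.mp
            (pow_pos (by norm_num : (0:ℕ) < 2) n))) (ENNReal.natCast_ne_top _)]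
        exact (one_mul _).symm
    _ ≤ ((2 ^ n : ℕ) : ℝ≥0∞)⁻¹ * ENNReal.ofReal (∑ x : BitString n, φ x) :=
        mul_le_mul_right (ENNReal.ofReal_le_ofReal hreal) _
    _ ≤ ((2 ^ n : ℕ) : ℝ≥0∞)⁻¹ * ∑ x : BitString n, ENNReal.ofReal (φ x) :=
        mul_le_mul_right (ofReal_sum_le _ _) _
    _ ≤ ((2 ^ n : ℕ) : ℝ≥0∞)⁻¹ * ∑ x : BitString n, gE n (onesCount x) (onesCount x) :=
        mul_le_mul_right hstep1 _

lemma ennreal_harmonic_eq :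
    ∑ i ∈ Finset.Icc 1 n, (i : ℝ≥0∞)⁻¹ =
      ENNReal.ofReal (∑ i ∈ Finset.Icc 1 n, (i : ℝ)⁻¹) := by
  rw [ENNReal.ofReal_sum_of_nonneg (fun i _ => by positivity)]
  apply Finset.sum_congr rfl
  intro i hi
  have hi0 : (0 : ℝ) < i := by exact_mod_cast (Finset.mem_Icc.mp hi).1
  rw [ENNReal.ofReal_inv_of_pos hi0, ENNReal.ofReal_natCast]

lemma Hmax_le (hn2 : 2 ≤ n) :
    Hmax n ≤ ENNReal.ofReal (10 * (n : ℝ) ^ 2 * Real.log n) := by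
  rw [Hmax, ennreal_harmonic_eq]
  have hH : ∑ i ∈ Finset.Icc 1 n, (i : ℝ)⁻¹ ≤ 1 + Real.log n := by
    have h := harmonic_le_one_add_log n
    have h3 := harmonic_cast_eq (n := n)
    linarith
  have hHnn : (0 : ℝ) ≤ ∑ i ∈ Finset.Icc 1 n, (i : ℝ)⁻¹ :=
    Finset.sum_nonneg fun i _ => by positivity
  rw [show (2 : ℝ≥0∞) = ENNReal.ofReal (2 : ℝ) by simp,
    ← ENNReal.ofReal_mul (by norm_num),
    show ((n * (n + 1) : ℕ) : ℝ≥0∞) = ENNReal.ofReal ((n * (n + 1) : ℕ) : ℝ) by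
      rw [ENNReal.ofReal_natCast],
    ← ENNReal.ofReal_mul (Nat.cast_nonneg _)]
  apply ENNReal.ofReal_le_ofReal
  have hlog2 : (0.6931471803 : ℝ) < Real.log 2 := Real.log_two_gt_d9
  have hmono : Real.log 2 ≤ Real.log n :=
    Real.log_le_log (by norm_num) (by exact_mod_cast hn2)
  have hL : (3 : ℝ) / 7 ≤ Real.log n := by linarith
  have hcast : ((n * (n + 1) : ℕ) : ℝ) = (n : ℝ) * ((n : ℝ) + 1) := by push_cast; ring
  rw [hcast]
  have hn1 : (2 : ℝ) ≤ n := by exact_mod_cast hn2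
  nlinarith [hH, hL, sq_nonneg ((n : ℝ)),
    mul_nonneg (sq_nonneg ((n : ℝ))) (by linarith : (0 : ℝ) ≤ 7 * Real.log n - 3),
    mul_nonneg (by linarith : (0:ℝ) ≤ (n:ℝ)) (by linarith : (0:ℝ) ≤ Real.log n)]

end Final

/-- SEMO with uniform parent selection on OneMinMax needs expected time
at least `n² ln n / 2 − c·n²`, and (known upper bound) at most `O(n² log n)`;
together the expected runtime is `Θ(n² log n)`. -/
theorem semo_uniform_oneminmax_theta :
    ∃ c C : ℝ, 0 < c ∧ 0 < C ∧ ∀ n : ℕ, ∀ hn : 0 < n,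
      (ENNReal.ofReal (((n : ℝ) ^ 2 * Real.log n) / 2 - c * (n : ℝ) ^ 2) ≤
        expectedRuntime (initDist n)
          (step (OneMinMax (n := n)) uniformSelect (localMutation hn))
          (coversFront OneMinMax)) ∧
      (2 ≤ n →
        expectedRuntime (initDist n)
            (step (OneMinMax (n := n)) uniformSelect (localMutation hn))
            (coversFront OneMinMax) ≤
          ENNReal.ofReal (C * (n : ℝ) ^ 2 * Real.log n)) := by
  refine ⟨1, 10, one_pos, by norm_num, ?_⟩
  intro n hn
  have hrt : expectedRuntime (initDist n)
      (step (OneMinMax (n := n)) uniformSelect (localMutation hn))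
      (coversFront OneMinMax) = ∑' t, uNC hn t := expectedRuntime_eq hn
  constructor
  · rw [hrt]
    exact le_trans (lower_main hn) (G0_le_runtime hn)
  · intro hn2
    rw [hrt]
    exact le_trans (runtime_le_H0 hn) (Hmax_le hn2)

end EMO
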